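/- arXiv:1211.0129 — 2 statements merged into one kernel-verified Lean document; each statement's English description precedes it below -/
import Mathlib

section
/- Let q ≥ 1 and h ≥ 1 be integers, and let β be a complex number that is algebraic of degree at most 2 over ℚ with |β| = √q. If β^{24h} = q^{12h}, then β^{24} = q^{12}. -/
lemma dvd_twelve_of_totient_le_two {n : ℕ} (hn : n ≠ 0) (h : Nat.totient n ≤ 2) :
    n ∣ 12 := by
  have key : ∀ m, m ∣ n → Nat.totient m ≤ 2 := by
    intro m hm
    exact (Nat.le_of_dvd (Nat.totient_pos.2 (Nat.pos_of_ne_zero hn))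
      (Nat.totient_dvd_of_dvd hm)).trans h
  rw [← Nat.factorization_le_iff_dvd hn (by norm_num)]
  intro p
  by_cases hp : p.Prime
  · rw [← Nat.Prime.pow_dvd_iff_le_factorization hp (by norm_num)]
    set k := n.factorization p with hk
    have hpk : p ^ k ∣ n := Nat.ordProj_dvd n p
    rcases Nat.eq_zero_or_pos k with h0 | hkpos
    · simp [h0]
    · have hpn : p ∣ n := dvd_trans (dvd_pow_self p hkpos.ne') hpk
      have hple : p - 1 ≤ 2 := by
        have := key p hpn
        rwa [Nat.totient_prime hp] at this
      have hp2 : 2 ≤ p := hp.two_le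
      have hp3 : p ≤ 3 := by omega
      interval_cases p
      · -- p = 2 : show 2 ^ k ∣ 12, need k ≤ 2
        have hk2 : k ≤ 2 := by
          by_contra hc
          have h8 : (8 : ℕ) ∣ n := dvd_trans (by
            have : (2 : ℕ) ^ 3 ∣ 2 ^ k := pow_dvd_pow 2 (by omega)
            simpa using this) hpk
          have := key 8 h8
          norm_num [show Nat.totient 8 = 4 from by decide] at this
        calc (2 : ℕ) ^ k ∣ 2 ^ 2 := pow_dvd_pow 2 hk2
          _ ∣ 12 := by norm_num
      · -- p = 3 : show 3 ^ k ∣ 12, need k ≤ 1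
        have hk1 : k ≤ 1 := by
          by_contra hc
          have h9 : (9 : ℕ) ∣ n := dvd_trans (by
            have : (3 : ℕ) ^ 2 ∣ 3 ^ k := pow_dvd_pow 3 (by omega)
            simpa using this) hpk
          have := key 9 h9
          norm_num [show Nat.totient 9 = 6 from by decide] at this
        calc (3 : ℕ) ^ k ∣ 3 ^ 1 := pow_dvd_pow 3 hk1
          _ ∣ 12 := by norm_num
  · simp [Nat.factorization_eq_zero_of_not_prime n hp]

/-- Let `q ≥ 1` and `h ≥ 1` be integers, and let `β` be a complex number that is algebraic of
degree at most `2` over `ℚ` with `|β| = √q`. If `β^(24h) = q^(12h)`, then `β^24 = q^12`. -/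
theorem pow_24_eq_of_pow_24h_eq (q h : ℕ) (hq : 1 ≤ q) (hh : 1 ≤ h) (β : ℂ)
    (halg : IsAlgebraic ℚ β)
    (hdeg : Module.finrank ℚ (IntermediateField.adjoin ℚ {β}) ≤ 2)
    (habs : ‖β‖ = Real.sqrt (q : ℝ))
    (hpow : β ^ (24 * h) = (q : ℂ) ^ (12 * h)) :
    β ^ 24 = (q : ℂ) ^ 12 := by
  have hqC : (q : ℂ) ≠ 0 := Nat.cast_ne_zero.2 (by omega)
  set K := IntermediateField.adjoin ℚ {β} with hK
  haveI : FiniteDimensional ℚ K := IntermediateField.adjoin.finiteDimensional halg.isIntegral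
  have hβK : β ∈ K := IntermediateField.mem_adjoin_simple_self ℚ β
  set b : K := ⟨β, hβK⟩ with hb
  have hqK : ((q : K) : ℂ) = (q : ℂ) := by push_cast; ring
  have hqK0 : (q : K) ≠ 0 := by
    intro h0
    apply hqC
    rw [← hqK, h0]; simp
  set u : K := b ^ 2 / (q : K) with hu
  have huC : (u : ℂ) = β ^ 2 / (q : ℂ) := by
    rw [hu]
    push_cast
    rfl
  have hu1 : u ^ (12 * h) = 1 := by
    have : ((u ^ (12 * h) : K) : ℂ) = ((1 : K) : ℂ) := by
      push_cast
      rw [huC, div_pow, ← pow_mul]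
      rw [show 2 * (12 * h) = 24 * h from by ring, hpow]
      field_simp
    exact_mod_cast Subtype.coe_injective this
  have h12h : 0 < 12 * h := by positivity
  have hfin : IsOfFinOrder u := isOfFinOrder_iff_pow_eq_one.2 ⟨12 * h, h12h, hu1⟩
  set n := orderOf u with hn
  have hnpos : 0 < n := hfin.orderOf_pos
  have hprim : IsPrimitiveRoot u n := IsPrimitiveRoot.orderOf u
  have htot : Nat.totient n ≤ 2 := by
    have hcyc := Polynomial.cyclotomic_eq_minpoly_rat hprim hnpos
    have hdegmin : (minpoly ℚ u).natDegree ≤ Module.finrank ℚ K := minpoly.natDegree_le u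
    have hct : (Polynomial.cyclotomic n ℚ).natDegree = Nat.totient n :=
      Polynomial.natDegree_cyclotomic n ℚ
    rw [← hct, hcyc]
    exact hdegmin.trans hdeg
  have hdvd : n ∣ 12 := dvd_twelve_of_totient_le_two hnpos.ne' htot
  have hu12 : u ^ 12 = 1 := orderOf_dvd_iff_pow_eq_one.1 hdvd
  have h2 : (β ^ 2 / (q : ℂ)) ^ 12 = 1 := by
    rw [← huC]
    have : ((u ^ 12 : K) : ℂ) = ((1 : K) : ℂ) := by rw [hu12]
    push_cast at this
    exact this
  calc β ^ 24 = (β ^ 2 / (q : ℂ)) ^ 12 * (q : ℂ) ^ 12 := by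
        field_simp
    _ = (q : ℂ) ^ 12 := by rw [h2]; ring
end

section
/- Let k be a number field of degree n over ℚ, Galois over ℚ, with a fixed embedding ι : k ↪ ℂ. Let 𝔮 be a nonzero prime ideal of 𝒪_k with absolute norm q := N(𝔮), let h ≥ 1 be an integer, let E ≥ 1 be a real number, and let α ∈ 𝒪_k be a nonzero element with 𝔮^h = α𝒪_k and ∏_{τ : k ↪ ℂ} max(1, |τ(α)|) ≤ |N_{k/ℚ}(α)| · E^n. Let a_σ ∈ {0, 8, 12, 16, 24} be integers for σ ∈ Gal(k/ℚ), let b be an integer with b² ≤ 4q, and let β ∈ ℂ satisfy β² + bβ + q = 0. Let F ⊆ ℂ be the subfield generated over ℚ by ι(k) and β. Then |N_{F/ℚ}(ι(∏_{σ ∈ Gal(k/ℚ)} σ(α)^{a_σ}) − β^{24h})| ≤ (q^{24h} E^{24n} + q^{12h})^{2n}. -/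
set_option maxHeartbeats 1000000 in
lemma aux_root_abs (b q : ℝ) (hb : b ^ 2 ≤ 4 * q) (w : ℂ)
    (hw : w ^ 2 + (b : ℂ) * w + (q : ℂ) = 0) : ‖w‖ ^ 2 = q := by
  have h1 := congrArg Complex.re hw
  have h2 := congrArg Complex.im hw
  simp [pow_two, Complex.add_re, Complex.add_im, Complex.mul_re, Complex.mul_im] at h1 h2
  rw [Complex.sq_norm, Complex.normSq_apply]
  have h2' : w.im * (2 * w.re + b) = 0 := by ring_nf; ring_nf at h2; linarith
  rcases mul_eq_zero.1 h2' with h | h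
  · have h0 : (2 * w.re + b) ^ 2 = b ^ 2 - 4 * q := by nlinarith [h1, h]
    have h3 : 2 * w.re + b = 0 := by nlinarith [sq_nonneg (2 * w.re + b)]
    nlinarith [h1, h, h3]
  · have hb2 : b = -2 * w.re := by linarith
    have hbu : b * w.re = -2 * (w.re * w.re) := by rw [hb2]; ring
    linarith [h1, hbu]

set_option maxHeartbeats 1000000 in
open IntermediateField Polynomial in
lemma aux_fd (k : Type*) [Field k] [NumberField k] (ι : k →+* ℂ) (β : ℂ)
    (c d : ℚ) (hroot : β ^ 2 + (c : ℂ) * β + (d : ℂ) = 0) :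
    FiniteDimensional ℚ (adjoin ℚ (Set.range ι ∪ {β})) ∧
      Module.finrank ℚ (adjoin ℚ (Set.range ι ∪ {β})) ≤ 2 * Module.finrank ℚ k := by
  classical
  set ι' : k →ₐ[ℚ] ℂ := ι.toRatAlgHom with hι'
  set K' : IntermediateField ℚ ℂ := ι'.fieldRange with hK'
  have e : k ≃ₐ[ℚ] K' := AlgEquiv.ofInjectiveField ι'
  have hfdK' : FiniteDimensional ℚ K' := e.toLinearEquiv.finiteDimensional
  have hrkK' : Module.finrank ℚ K' = Module.finrank ℚ k := e.symm.toLinearEquiv.finrank_eq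
  set p : ℚ[X] := X ^ 2 + C c * X + C d with hp
  have hpmonic : p.Monic := by
    have h1 : (C c * X + C d).degree < 2 :=
      lt_of_le_of_lt Polynomial.degree_linear_le (by norm_num)
    simpa [hp, add_assoc] using Polynomial.monic_X_pow_add h1
  have hpdeg : p.degree ≤ 2 := by rw [hp]; compute_degree!
  have haev : ∀ (A : IntermediateField ℚ ℂ),
      Polynomial.aeval β (p.map (algebraMap ℚ A)) = 0 := by
    intro A
    rw [Polynomial.aeval_map_algebraMap]
    simpa [hp] using hroot
  have hintQ : IsIntegral ℚ β := by
    refine ⟨p, hpmonic, ?_⟩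
    simpa [hp, Polynomial.eval₂_map] using hroot
  have hintK' : IsIntegral K' β := hintQ.tower_top
  have hmindeg : (minpoly K' β).natDegree ≤ 2 := by
    rw [Polynomial.natDegree_le_iff_degree_le]
    refine le_trans (minpoly.degree_le_of_ne_zero K' β ?_ (haev K')) ?_
    · exact (Polynomial.Monic.map _ hpmonic).ne_zero
    · rwa [Polynomial.degree_map]
  set L : IntermediateField K' ℂ := adjoin K' {β} with hL
  have hfdL : FiniteDimensional K' L := adjoin.finiteDimensional hintK'
  have hrkL : Module.finrank K' L ≤ 2 := by
    rw [hL, adjoin.finrank hintK']; exact hmindeg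
  have hadj : adjoin ℚ (Set.range ι) = K' := by
    apply le_antisymm
    · exact adjoin_le_iff.2 (fun y hy => by obtain ⟨z, rfl⟩ := hy; exact ⟨z, rfl⟩)
    · rintro y ⟨z, rfl⟩
      exact subset_adjoin _ _ ⟨z, rfl⟩
  have hFeq : L.restrictScalars ℚ = adjoin ℚ (Set.range ι ∪ {β}) := by
    rw [hL, ← hadj]
    exact adjoin_adjoin_left ℚ (Set.range ι) {β}
  have hfdL' : FiniteDimensional ℚ L := FiniteDimensional.trans ℚ K' L
  have hrk : Module.finrank ℚ L ≤ 2 * Module.finrank ℚ k := by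
    have hmm := Module.finrank_mul_finrank ℚ K' L
    calc Module.finrank ℚ L = Module.finrank ℚ K' * Module.finrank K' L := hmm.symm
    _ ≤ Module.finrank ℚ K' * 2 := Nat.mul_le_mul_left _ hrkL
    _ = 2 * Module.finrank ℚ k := by rw [hrkK']; ring
  have e2 : (L.restrictScalars ℚ) ≃ₗ[ℚ] L :=
    { toFun := fun x => ⟨x.1, x.2⟩
      invFun := fun x => ⟨x.1, x.2⟩
      map_add' := fun _ _ => rfl
      map_smul' := fun q x => rfl
      left_inv := fun _ => rfl
      right_inv := fun _ => rfl }
  have hfdF : FiniteDimensional ℚ (L.restrictScalars ℚ) := e2.symm.finiteDimensional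
  have hrkF : Module.finrank ℚ (L.restrictScalars ℚ) = Module.finrank ℚ L := e2.finrank_eq
  rw [← hFeq]
  exact ⟨hfdF, hrkF ▸ hrk⟩

set_option maxHeartbeats 2000000

/-- (Proposition 7.5) -/
theorem abs_norm_sub_le (k : Type*) [Field k] [NumberField k] [IsGalois ℚ k]
    (ι : k →+* ℂ) (𝔮 : Ideal (NumberField.RingOfIntegers k)) (hp : 𝔮.IsPrime) (hp0 : 𝔮 ≠ ⊥)
    (h : ℕ) (hh : 1 ≤ h) (E : ℝ) (hE : 1 ≤ E)
    (α : NumberField.RingOfIntegers k) (hα : α ≠ 0) (hgen : 𝔮 ^ h = Ideal.span {α})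
    (hht : ∏ τ : k →+* ℂ, max 1 ‖τ (α : k)‖ ≤
      |(Algebra.norm ℚ (α : k) : ℝ)| * E ^ Module.finrank ℚ k)
    (a : (k ≃ₐ[ℚ] k) → ℕ) (ha : ∀ σ, a σ ∈ ({0, 8, 12, 16, 24} : Set ℕ))
    (b : ℤ) (hb : b ^ 2 ≤ 4 * (Ideal.absNorm 𝔮 : ℤ)) (β : ℂ)
    (hβ : β ^ 2 + (b : ℂ) * β + (Ideal.absNorm 𝔮 : ℂ) = 0)
    (x : IntermediateField.adjoin ℚ (Set.range ι ∪ {β}))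
    (hx : (x : ℂ) = ι (∏ σ : k ≃ₐ[ℚ] k, σ (α : k) ^ a σ) - β ^ (24 * h)) :
    |(Algebra.norm ℚ x : ℝ)| ≤
      ((Ideal.absNorm 𝔮 : ℝ) ^ (24 * h) * E ^ (24 * Module.finrank ℚ k) +
        (Ideal.absNorm 𝔮 : ℝ) ^ (12 * h)) ^ (2 * Module.finrank ℚ k) := by
  classical
  set q : ℕ := Ideal.absNorm 𝔮 with hq
  set n : ℕ := Module.finrank ℚ k with hn
  have hq0 : q ≠ 0 := by
    rw [hq, ne_eq, Ideal.absNorm_eq_zero_iff]; exact hp0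
  have hq1 : (1 : ℝ) ≤ (q : ℝ) := by exact_mod_cast Nat.one_le_iff_ne_zero.2 hq0
  set C : ℝ := (q : ℝ) ^ (24 * h) * E ^ (24 * n) + (q : ℝ) ^ (12 * h) with hC
  have hC1 : (1 : ℝ) ≤ C := by
    have h1 : (1 : ℝ) ≤ (q : ℝ) ^ (12 * h) := one_le_pow₀ hq1
    have h2 : (0 : ℝ) ≤ (q : ℝ) ^ (24 * h) * E ^ (24 * n) := by positivity
    linarith
  -- |N_{k/ℚ} α| = q ^ h
  have hNα : |(Algebra.norm ℚ (α : k) : ℝ)| = (q : ℝ) ^ h := by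
    have h3 : (Algebra.norm ℤ α).natAbs = q ^ h := by
      rw [← Ideal.absNorm_span_singleton, ← hgen, map_pow]
    rw [← Algebra.coe_norm_int]
    push_cast
    rw [← Int.cast_abs, Int.abs_eq_natAbs]
    exact_mod_cast congrArg (Nat.cast : ℕ → ℝ) h3
  -- finite dimensionality of F
  obtain ⟨hFD, hFrk⟩ := aux_fd k ι β (b : ℚ) (q : ℚ)
    (by push_cast; exact_mod_cast hβ)
  haveI : FiniteDimensional ℚ (IntermediateField.adjoin ℚ (Set.range ι ∪ {β})) := hFD
  -- membership of the pieces
  set P : k := ∏ σ : k ≃ₐ[ℚ] k, σ (α : k) ^ a σ with hP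
  have hmemι : ∀ t : k, ι t ∈ IntermediateField.adjoin ℚ (Set.range ι ∪ {β}) :=
    fun t => IntermediateField.subset_adjoin _ _ (Or.inl ⟨t, rfl⟩)
  have hmemβ : β ∈ IntermediateField.adjoin ℚ (Set.range ι ∪ {β}) :=
    IntermediateField.subset_adjoin _ _ (Or.inr rfl)
  set y := (⟨ι P, hmemι P⟩ : IntermediateField.adjoin ℚ (Set.range ι ∪ {β})) with hy
  set z := (⟨β, hmemβ⟩ : IntermediateField.adjoin ℚ (Set.range ι ∪ {β})) with hz
  have hxyz : x = y - z ^ (24 * h) := by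
    apply Subtype.ext
    push_cast
    rw [hx]
  -- the equation satisfied by z inside F
  have hzeq : z ^ 2 + ((b : ℤ) : IntermediateField.adjoin ℚ (Set.range ι ∪ {β})) * z +
      ((q : ℕ) : IntermediateField.adjoin ℚ (Set.range ι ∪ {β})) = 0 := by
    apply Subtype.ext
    exact hβ
  -- restriction of embeddings to k
  set ι'' := ι.codRestrict (IntermediateField.adjoin ℚ (Set.range ι ∪ {β})) (fun t => hmemι t) with hι''
  -- per-embedding bound
  have key : ∀ φ : (IntermediateField.adjoin ℚ (Set.range ι ∪ {β})) →ₐ[ℚ] ℂ, ‖φ x‖ ≤ C := by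
    intro φ
    have hinj : Function.Injective φ := φ.toRingHom.injective
    -- bound for the β-part
    have hw : ‖φ z‖ ^ 2 = (q : ℝ) := by
      apply aux_root_abs (b : ℝ) (q : ℝ) (by exact_mod_cast hb)
      have := congrArg φ hzeq
      push_cast at this
      rw [map_add, map_add, map_pow, map_mul, map_intCast, map_natCast, map_zero] at this
      push_cast
      exact this
    have hwabs : ‖φ z ^ (24 * h)‖ = (q : ℝ) ^ (12 * h) := by
      rw [norm_pow, show 24 * h = 2 * (12 * h) by ring, pow_mul, hw]
    -- bound for the ι-part
    set ρ : k →+* ℂ := (φ.toRingHom).comp ι'' with hρ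
    have hρinj : Function.Injective ρ := ρ.injective
    have hφy : φ y = ρ P := rfl
    have hbij : Function.Bijective (fun σ : k ≃ₐ[ℚ] k => ρ.comp (σ : k →+* k)) := by
      rw [Fintype.bijective_iff_injective_and_card]
      constructor
      · intro σ1 σ2 h12
        apply AlgEquiv.ext
        intro t
        exact hρinj (RingHom.congr_fun h12 t)
      · rw [NumberField.Embeddings.card k ℂ, ← Nat.card_eq_fintype_card, IsGalois.card_aut_eq_finrank ℚ k]
    have hexp : ∀ σ : k ≃ₐ[ℚ] k, a σ ≤ 24 := by
      intro σ
      rcases ha σ with h' | h' | h' | h' | h' <;> simp_all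
    have hyb : ‖φ y‖ ≤ (q : ℝ) ^ (24 * h) * E ^ (24 * n) := by
      rw [hφy, hP, map_prod]
      rw [norm_prod]
      have step1 : ∀ σ : k ≃ₐ[ℚ] k,
          ‖ρ (σ (α : k) ^ a σ)‖ ≤ max 1 ‖ρ (σ (α : k))‖ ^ 24 := by
        intro σ
        rw [map_pow, norm_pow]
        calc ‖ρ (σ (α : k))‖ ^ a σ
            ≤ max 1 ‖ρ (σ (α : k))‖ ^ a σ :=
              pow_le_pow_left₀ (norm_nonneg _) (le_max_right _ _) _
          _ ≤ max 1 ‖ρ (σ (α : k))‖ ^ 24 :=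
              pow_le_pow_right₀ (le_max_left _ _) (hexp σ)
      calc (∏ σ : k ≃ₐ[ℚ] k, ‖ρ (σ (α : k) ^ a σ)‖)
          ≤ ∏ σ : k ≃ₐ[ℚ] k, max 1 ‖ρ (σ (α : k))‖ ^ 24 :=
            Finset.prod_le_prod (fun σ _ => norm_nonneg _) (fun σ _ => step1 σ)
        _ = (∏ σ : k ≃ₐ[ℚ] k, max 1 ‖ρ (σ (α : k))‖) ^ 24 := by
            rw [Finset.prod_pow]
        _ = (∏ τ : k →+* ℂ, max 1 ‖τ (α : k)‖) ^ 24 := by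
            congr 1
            exact Fintype.prod_bijective _ hbij _ _ (fun σ => rfl)
        _ ≤ (|(Algebra.norm ℚ (α : k) : ℝ)| * E ^ n) ^ 24 := by
            apply pow_le_pow_left₀ ?_ hht
            exact Finset.prod_nonneg fun τ _ => le_trans zero_le_one (le_max_left _ _)
        _ = (q : ℝ) ^ (24 * h) * E ^ (24 * n) := by
            rw [hNα, mul_pow, ← pow_mul, ← pow_mul]
            ring_nf
    -- combine
    rw [hxyz, map_sub, map_pow]
    calc ‖φ y - φ z ^ (24 * h)‖
        ≤ ‖φ y‖ + ‖φ z ^ (24 * h)‖ := by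
          exact (norm_sub_le _ _)
      _ ≤ (q : ℝ) ^ (24 * h) * E ^ (24 * n) + (q : ℝ) ^ (12 * h) := by
          rw [hwabs]; exact add_le_add_left hyb _
  -- assemble via the norm formula
  have hnorm : ((Algebra.norm ℚ x : ℚ) : ℂ) =
      ∏ φ : (IntermediateField.adjoin ℚ (Set.range ι ∪ {β})) →ₐ[ℚ] ℂ, φ x := by
    exact_mod_cast Algebra.norm_eq_prod_embeddings ℚ ℂ x
  have habs : |(Algebra.norm ℚ x : ℝ)| =
      ∏ φ : (IntermediateField.adjoin ℚ (Set.range ι ∪ {β})) →ₐ[ℚ] ℂ, ‖φ x‖ := by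
    rw [← norm_prod, ← hnorm]
    rw [show ((Algebra.norm ℚ x : ℚ) : ℂ) = (((Algebra.norm ℚ x : ℚ) : ℝ) : ℂ) by push_cast; ring]
    rw [Complex.norm_real, Real.norm_eq_abs]
  rw [habs]
  calc (∏ φ : (IntermediateField.adjoin ℚ (Set.range ι ∪ {β})) →ₐ[ℚ] ℂ, ‖φ x‖)
      ≤ ∏ _φ : (IntermediateField.adjoin ℚ (Set.range ι ∪ {β})) →ₐ[ℚ] ℂ, C :=
        Finset.prod_le_prod (fun φ _ => norm_nonneg _) (fun φ _ => key φ)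
    _ = C ^ Fintype.card ((IntermediateField.adjoin ℚ (Set.range ι ∪ {β})) →ₐ[ℚ] ℂ) := by rw [Finset.prod_const, Finset.card_univ]
    _ = C ^ Module.finrank ℚ (IntermediateField.adjoin ℚ (Set.range ι ∪ {β})) := by rw [AlgHom.card]
    _ ≤ C ^ (2 * n) := pow_le_pow_right₀ hC1 hFrk
end
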